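/- Let g ∈ ℤ[i]\{0\}, y ∈ ℂ with |y| > 0, and u > 0 with u ≤ |y|/2. For the principal branch of the square root (argument in (−π/2, π/2] after halving), every q ∈ ℂ with Re(q) ≥ 0, 0 ≤ arg(y/g) ≤ π/2 and |q² − y/g| ≤ u/|g| satisfies |q − √(y/g)| ≤ √2 · u / √(|y g|). -/

import Mathlib

open Complex Real GaussianInt

/-- If `Re q ≥ 0`, `0 ≤ arg(y/g) ≤ π/2` and `|q² − y/g| ≤ u/|g|` with `u ≤ |y|/2`, then
`q` is within `√2 u / √(|y g|)` of the principal square root of `y/g`. -/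
theorem close_to_sqrt (g : GaussianInt) (hg : g ≠ 0) (y : ℂ) (hy : 0 < ‖y‖)
    (u : ℝ) (hu : 0 < u) (hu2 : u ≤ ‖y‖ / 2) (q : ℂ) (hq : 0 ≤ q.re)
    (harg1 : 0 ≤ Complex.arg (y / GaussianInt.toComplex g))
    (harg2 : Complex.arg (y / GaussianInt.toComplex g) ≤ π / 2)
    (hball : ‖q ^ 2 - y / GaussianInt.toComplex g‖
        ≤ u / ‖GaussianInt.toComplex g‖) :
    ‖q - (y / GaussianInt.toComplex g) ^ (1 / 2 : ℂ)‖
      ≤ Real.sqrt 2 * u / Real.sqrt (‖y * GaussianInt.toComplex g‖) := by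
  have hyne : y ≠ 0 := by
    intro h; simp [h] at hy
  have hgC : GaussianInt.toComplex g ≠ 0 := by
    simpa [GaussianInt.toComplex_eq_zero] using hg
  have hgabs : 0 < ‖GaussianInt.toComplex g‖ := norm_pos_iff.mpr hgC
  set w : ℂ := y / GaussianInt.toComplex g with hwdef
  have hw : w ≠ 0 := div_ne_zero hyne hgC
  have hwabs : ‖w‖ = ‖y‖ / ‖GaussianInt.toComplex g‖ :=
    norm_div y _
  have hwpos : 0 < ‖w‖ := norm_pos_iff.mpr hw
  set s : ℂ := w ^ (1 / 2 : ℂ) with hsdef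
  have hs2 : s ^ 2 = w := by
    have h := Complex.cpow_nat_inv_pow w (n := 2) two_ne_zero
    have h2 : ((2 : ℕ)⁻¹ : ℂ) = (1 / 2 : ℂ) := by norm_num
    rw [h2] at h
    exact h
  -- compute the real part of s
  have hsre : s.re = Real.sqrt (‖w‖) * Real.cos (Complex.arg w / 2) := by
    rw [hsdef, Complex.cpow_def_of_ne_zero hw, Complex.exp_re]
    congr 1
    · have : (Complex.log w * (1 / 2 : ℂ)).re = Real.log (‖w‖) / 2 := by
        simp [Complex.log_re, Complex.mul_re]
        ring
      rw [this, Real.sqrt_eq_rpow, Real.rpow_def_of_pos hwpos]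
      ring_nf
    · congr 1
      simp [Complex.mul_im, Complex.log_im, Complex.log_re]
      ring
  set A : ℝ := Real.sqrt (‖w‖ / 2) with hAdef
  have hApos : 0 < A := Real.sqrt_pos.mpr (by linarith)
  have hcos : Real.sqrt 2 / 2 ≤ Real.cos (Complex.arg w / 2) := by
    have h1 : Real.cos (π / 4) ≤ Real.cos (Complex.arg w / 2) := by
      apply Real.cos_le_cos_of_nonneg_of_le_pi (by linarith) (by linarith [Real.pi_pos])
        (by linarith)
    simpa [Real.cos_pi_div_four] using h1
  have hhalf : (1:ℝ) / Real.sqrt 2 = Real.sqrt 2 / 2 := by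
    rw [div_eq_div_iff (by positivity) (by norm_num), one_mul]
    exact (Real.mul_self_sqrt (by norm_num : (0:ℝ) ≤ 2)).symm
  have hAs : A ≤ s.re := by
    rw [hsre, hAdef]
    have h : Real.sqrt (‖w‖ / 2) = Real.sqrt (‖w‖) * (Real.sqrt 2 / 2) := by
      rw [Real.sqrt_div hwpos.le, div_eq_mul_one_div, hhalf]
    rw [h]
    exact mul_le_mul_of_nonneg_left hcos (Real.sqrt_nonneg _)
  -- |q + s| ≥ A
  have hqs : A ≤ ‖q + s‖ := by
    calc A ≤ (q + s).re := by simp only [Complex.add_re]; linarith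
    _ ≤ ‖q + s‖ := Complex.re_le_norm _
  -- factorization
  have hfac : ‖q - s‖ * ‖q + s‖ = ‖q ^ 2 - w‖ := by
    rw [← norm_mul]
    congr 1
    rw [← hs2]; ring
  have hkey : ‖q - s‖ * A ≤ u / ‖GaussianInt.toComplex g‖ := by
    calc ‖q - s‖ * A ≤ ‖q - s‖ * ‖q + s‖ :=
          mul_le_mul_of_nonneg_left hqs (norm_nonneg _)
    _ = ‖q ^ 2 - w‖ := hfac
    _ ≤ u / ‖GaussianInt.toComplex g‖ := hball
  -- identity: RHS * A = u / |g|
  have hyg : Real.sqrt (‖y * GaussianInt.toComplex g‖)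
      = Real.sqrt (‖y‖) * Real.sqrt (‖GaussianInt.toComplex g‖) := by
    rw [norm_mul, Real.sqrt_mul (norm_nonneg _)]
  have hRA : Real.sqrt 2 * u / Real.sqrt (‖y * GaussianInt.toComplex g‖) * A
      = u / ‖GaussianInt.toComplex g‖ := by
    rw [hyg, hAdef, hwabs]
    rw [show ‖y‖ / ‖GaussianInt.toComplex g‖ / 2
        = ‖y‖ / (2 * ‖GaussianInt.toComplex g‖) by ring]
    rw [Real.sqrt_div hy.le, Real.sqrt_mul (by norm_num : (0:ℝ) ≤ 2)]
    have s2 : Real.sqrt 2 * Real.sqrt 2 = 2 := Real.mul_self_sqrt (by norm_num)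
    have sg : Real.sqrt (‖GaussianInt.toComplex g‖)
        * Real.sqrt (‖GaussianInt.toComplex g‖)
        = ‖GaussianInt.toComplex g‖ := Real.mul_self_sqrt (norm_nonneg _)
    have hsy : Real.sqrt (‖y‖) ≠ 0 := by positivity
    have hsg : Real.sqrt (‖GaussianInt.toComplex g‖) ≠ 0 := by positivity
    have hs2 : Real.sqrt 2 ≠ 0 := by positivity
    field_simp
    linear_combination (-1 : ℝ) * sg
  have h1 : ‖q - s‖
      ≤ (u / ‖GaussianInt.toComplex g‖) / A := (le_div_iff₀ hApos).mpr hkey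
  have h2 : Real.sqrt 2 * u / Real.sqrt (‖y * GaussianInt.toComplex g‖)
      = (u / ‖GaussianInt.toComplex g‖) / A :=
    (eq_div_iff hApos.ne').mpr hRA
  rw [h2]
  exact h1
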